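/- For any independent set I of the L×L toric grid (L even), the total contour length l(I) = ∑_R |∇R|, summed over the connected components R of R_O(I) = (I∩O) ∪ (E∖I), equals 4·Δ(I), where Δ(I) = L^2/2 − |I| is the efficiency gap of I. -/

import Mathlib

open scoped Classical

/-- The toric grid: vertex set `(ZMod L) × (ZMod L)`, with an edge between two
vertices iff they differ by `±1 (mod L)` in exactly one coordinate. -/
def torus (L : ℕ) : SimpleGraph (ZMod L × ZMod L) :=
  SimpleGraph.fromRel (fun u v =>
    (u.1 = v.1 ∧ u.2 = v.2 + 1) ∨ (u.2 = v.2 ∧ u.1 = v.1 + 1))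

/-- A vertex of the toric grid is even if its coordinate sum is even. -/
def isEvenVertex {L : ℕ} [NeZero L] (v : ZMod L × ZMod L) : Prop :=
  Even (v.1.val + v.2.val)

/-- The even class `E`. -/
noncomputable def evenClass (L : ℕ) [NeZero L] : Finset (ZMod L × ZMod L) :=
  Finset.univ.filter (fun v => isEvenVertex v)

/-- The odd class `O`. -/
noncomputable def oddClass (L : ℕ) [NeZero L] : Finset (ZMod L × ZMod L) :=
  Finset.univ.filter (fun v => ¬ isEvenVertex v)

/-- `R_O(I) = (I ∩ O) ∪ (E ∖ I)`. -/
noncomputable def RO (L : ℕ) [NeZero L] (I : Finset (ZMod L × ZMod L)) :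
    Finset (ZMod L × ZMod L) :=
  (I ∩ oddClass L) ∪ (evenClass L \ I)

/-- `|∇S|`: the number of edges of the toric grid with exactly one endpoint in
`S`, counted as ordered pairs `(u,v)` with `u ∈ S`, `v ∉ S`, `u ~ v` (each cut
edge is counted exactly once this way). -/
noncomputable def cutCard (L : ℕ) [NeZero L] (S : Finset (ZMod L × ZMod L)) : ℕ :=
  (Finset.univ.filter
    (fun p : (ZMod L × ZMod L) × (ZMod L × ZMod L) =>
      p.1 ∈ S ∧ p.2 ∉ S ∧ (torus L).Adj p.1 p.2)).card

/-- `R` is a connected component of `R_O(I)`: it is a nonempty subset of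
`R_O(I)`, closed under adjacency within `R_O(I)`, and connected in the induced
subgraph. -/
def IsComponent (L : ℕ) [NeZero L] (I R : Finset (ZMod L × ZMod L)) : Prop :=
  R.Nonempty ∧ R ⊆ RO L I ∧
  (∀ v ∈ R, ∀ w ∈ RO L I, (torus L).Adj v w → w ∈ R) ∧
  ((torus L).induce (↑R : Set (ZMod L × ZMod L))).Connected

/-! ### Auxiliary lemmas -/

set_option linter.unusedSectionVars false

section WalkAux

variable {V : Type*} {G : SimpleGraph V}

lemma walk_ind {s : Set V} (P : V → Prop)
    (hP : ∀ a b : V, a ∈ s → b ∈ s → G.Adj a b → P a → P b) :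
    ∀ {a b : s} (_ : (G.induce s).Walk a b), P a → P b := by
  intro a b p
  induction p with
  | nil => exact id
  | @cons u x y h q ih =>
    intro hu
    exact ih (hP u x u.2 x.2 (by simpa using h) hu)

lemma reach_ind {s : Set V} (P : V → Prop)
    (hP : ∀ a b : V, a ∈ s → b ∈ s → G.Adj a b → P a → P b)
    {a b : s} (h : (G.induce s).Reachable a b) (ha : P a) : P b := by
  obtain ⟨p⟩ := h
  exact walk_ind P hP p ha

lemma walk_transfer {s t : Set V}
    (hcl : ∀ a b : V, a ∈ s → b ∈ s → G.Adj a b → a ∈ t → b ∈ t) :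
    ∀ {a b : s} (_ : (G.induce s).Walk a b) (ha : (a : V) ∈ t),
      ∃ hb : (b : V) ∈ t, (G.induce t).Reachable ⟨a, ha⟩ ⟨b, hb⟩ := by
  intro a b p
  induction p with
  | nil => intro ha; exact ⟨ha, SimpleGraph.Reachable.refl _⟩
  | @cons u x y h q ih =>
    intro hu
    have hx : (x : V) ∈ t := hcl u x u.2 x.2 (by simpa using h) hu
    obtain ⟨hb, hr⟩ := ih hx
    exact ⟨hb, (SimpleGraph.Adj.reachable
      (show (G.induce t).Adj ⟨u, hu⟩ ⟨x, hx⟩ by simpa using h)).trans hr⟩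

end WalkAux

section ZModAux

variable {L : ℕ} [NeZero L]

lemma torus_adj (u v : ZMod L × ZMod L) :
    (torus L).Adj u v ↔ u ≠ v ∧
      ((u.1 = v.1 ∧ u.2 = v.2 + 1) ∨ (u.2 = v.2 ∧ u.1 = v.1 + 1) ∨
       (v.1 = u.1 ∧ v.2 = u.2 + 1) ∨ (v.2 = u.2 ∧ v.1 = u.1 + 1)) := by
  simp only [torus, SimpleGraph.fromRel_adj]
  tauto

lemma zmod_one_ne_zero (hL : 2 ≤ L) : (1 : ZMod L) ≠ 0 := by
  have : ((1 : ℕ) : ZMod L) ≠ 0 := by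
    rw [Ne, ZMod.natCast_eq_zero_iff]
    intro h
    have := Nat.le_of_dvd one_pos h
    omega
  simpa using this

lemma zmod_two_ne_zero (hL : 3 ≤ L) : (2 : ZMod L) ≠ 0 := by
  have : ((2 : ℕ) : ZMod L) ≠ 0 := by
    rw [Ne, ZMod.natCast_eq_zero_iff]
    intro h
    have := Nat.le_of_dvd (by norm_num) h
    omega
  simpa using this

lemma val_add_one_even (hLe : Even L) (a : ZMod L) :
    (Even ((a + 1).val) ↔ ¬ Even a.val) := by
  have hpos : 0 < L := NeZero.pos L
  have h2 : 2 ≤ L := by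
    obtain ⟨m, rfl⟩ := hLe; omega
  have h1 : (1 : ZMod L).val = 1 := ZMod.val_one'' (by omega)
  have hv : (a + 1).val = (a.val + 1) % L := by
    rw [ZMod.val_add, h1]
  have hlt : a.val < L := ZMod.val_lt a
  obtain ⟨m, rfl⟩ := hLe
  by_cases hc : a.val + 1 = m + m
  · rw [hv, hc, Nat.mod_self, Nat.even_iff, Nat.even_iff]
    omega
  · rw [hv, Nat.mod_eq_of_lt (by omega), Nat.even_iff, Nat.even_iff]
    omega

lemma adj_parity (hLe : Even L) {u v : ZMod L × ZMod L}
    (h : (torus L).Adj u v) : (isEvenVertex u ↔ ¬ isEvenVertex v) := by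
  rw [torus_adj] at h
  unfold isEvenVertex
  obtain ⟨-, h | h | h | h⟩ := h
  · rw [h.1, h.2, Nat.even_add, Nat.even_add]
    have := val_add_one_even hLe v.2
    tauto
  · rw [h.1, h.2, Nat.even_add, Nat.even_add]
    have := val_add_one_even hLe v.1
    tauto
  · rw [← h.1, h.2, Nat.even_add, Nat.even_add]
    have := val_add_one_even hLe u.2
    tauto
  · rw [← h.1, h.2, Nat.even_add, Nat.even_add]
    have := val_add_one_even hLe u.1
    tauto

lemma nbhd_eq (hL : 4 ≤ L) (u : ZMod L × ZMod L) :
    Finset.univ.filter (fun v => (torus L).Adj u v) =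
      {(u.1, u.2 + 1), (u.1, u.2 - 1), (u.1 + 1, u.2), (u.1 - 1, u.2)} := by
  have h1 : (1 : ZMod L) ≠ 0 := zmod_one_ne_zero (by omega)
  ext v
  simp only [Finset.mem_filter, Finset.mem_univ, true_and, Finset.mem_insert,
    Finset.mem_singleton, torus_adj]
  constructor
  · rintro ⟨hne, h | h | h | h⟩
    · right; left
      have : v.2 = u.2 - 1 := by rw [h.2]; ring
      exact Prod.ext h.1.symm this
    · right; right; right
      have : v.1 = u.1 - 1 := by rw [h.2]; ring
      exact Prod.ext this h.1.symm
    · left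
      exact Prod.ext h.1 h.2
    · right; right; left
      exact Prod.ext h.2 h.1
  · rintro (rfl | rfl | rfl | rfl)
    · refine ⟨?_, by tauto⟩
      intro hcon
      have h' : u.2 = u.2 + 1 := congrArg Prod.snd hcon
      exact h1 (by linear_combination -h')
    · refine ⟨?_, ?_⟩
      · intro hcon
        have h' : u.2 = u.2 - 1 := congrArg Prod.snd hcon
        exact h1 (by linear_combination h')
      · left
        exact ⟨rfl, by ring⟩
    · refine ⟨?_, by tauto⟩
      intro hcon
      have h' : u.1 = u.1 + 1 := congrArg Prod.fst hcon
      exact h1 (by linear_combination -h')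
    · refine ⟨?_, ?_⟩
      · intro hcon
        have h' : u.1 = u.1 - 1 := congrArg Prod.fst hcon
        exact h1 (by linear_combination h')
      · right; left
        exact ⟨rfl, by ring⟩

lemma nbhd_card (hL : 4 ≤ L) (u : ZMod L × ZMod L) :
    (Finset.univ.filter (fun v => (torus L).Adj u v)).card = 4 := by
  have h1 : (1 : ZMod L) ≠ 0 := zmod_one_ne_zero (by omega)
  have h2 : (2 : ZMod L) ≠ 0 := zmod_two_ne_zero (by omega)
  have f1 : u.2 + 1 ≠ u.2 - 1 := fun h => h2 (by linear_combination h)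
  have f2 : u.1 ≠ u.1 + 1 := fun h => h1 (by linear_combination -h)
  have f3 : u.1 ≠ u.1 - 1 := fun h => h1 (by linear_combination h)
  have f4 : u.1 + 1 ≠ u.1 - 1 := fun h => h2 (by linear_combination h)
  have m1 : ((u.1, u.2 + 1) : ZMod L × ZMod L) ∉
      ({(u.1, u.2 - 1), (u.1 + 1, u.2), (u.1 - 1, u.2)} : Finset (ZMod L × ZMod L)) := by
    simp [Prod.ext_iff, f1, f2, f3]
  have m2 : ((u.1, u.2 - 1) : ZMod L × ZMod L) ∉
      ({(u.1 + 1, u.2), (u.1 - 1, u.2)} : Finset (ZMod L × ZMod L)) := by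
    simp [Prod.ext_iff, f2, f3]
  have m3 : ((u.1 + 1, u.2) : ZMod L × ZMod L) ∉
      ({(u.1 - 1, u.2)} : Finset (ZMod L × ZMod L)) := by
    simp [Prod.ext_iff, f4]
  rw [nbhd_eq hL u, Finset.card_insert_of_notMem m1,
    Finset.card_insert_of_notMem m2, Finset.card_insert_of_notMem m3,
    Finset.card_singleton]

lemma card_evenClass (hLe : Even L) : (evenClass L).card = L ^ 2 / 2 := by
  have hodd : (evenClass L).card = (oddClass L).card := by
    apply Finset.card_nbij' (i := fun v => (v.1, v.2 + 1)) (j := fun v => (v.1, v.2 - 1))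
    · intro v hv
      simp only [evenClass, oddClass, Finset.mem_coe, Finset.mem_filter, Finset.mem_univ, true_and] at hv ⊢
      unfold isEvenVertex at hv ⊢
      rw [Nat.even_add] at hv ⊢
      have := val_add_one_even hLe v.2
      tauto
    · intro v hv
      simp only [evenClass, oddClass, Finset.mem_coe, Finset.mem_filter, Finset.mem_univ, true_and] at hv ⊢
      unfold isEvenVertex at hv ⊢
      rw [Nat.even_add] at hv ⊢
      have h := val_add_one_even hLe (v.2 - 1)
      rw [sub_add_cancel] at h
      tauto
    · intro v _; simp
    · intro v _; simp
  have hsplit : (evenClass L).card + (oddClass L).card =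
      Fintype.card (ZMod L × ZMod L) := by
    rw [← Finset.card_univ]
    exact Finset.card_filter_add_card_filter_not _
  rw [Fintype.card_prod, ZMod.card] at hsplit
  obtain ⟨m, rfl⟩ := hLe
  have : (m + m) ^ 2 = (m + m) * (m + m) := sq (m + m)
  omega

lemma card_pairs_fst {α : Type*} [Fintype α] (P : α × α → Prop) [DecidablePred P] :
    (Finset.univ.filter P).card =
      ∑ u, (Finset.univ.filter (fun v => P (u, v))).card := by
  rw [Finset.card_eq_sum_card_fiberwise
    (f := Prod.fst) (t := Finset.univ) (fun x _ => Finset.mem_univ _)]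
  refine Finset.sum_congr rfl fun u _ => ?_
  apply Finset.card_nbij' (i := Prod.snd) (j := fun v => (u, v))
  · intro p hp
    simp only [Finset.mem_coe, Finset.mem_filter, Finset.mem_univ, true_and] at hp ⊢
    rw [← hp.2]
    exact hp.1
  · intro v hv
    simp only [Finset.mem_coe, Finset.mem_filter, Finset.mem_univ, true_and] at hv ⊢
    refine ⟨hv, ?_⟩
    trivial
  · intro p hp
    simp only [Finset.mem_coe, Finset.mem_filter, Finset.mem_univ, true_and] at hp
    exact Prod.ext hp.2.symm rfl
  · intro v _; rfl

lemma card_pairs_snd {α : Type*} [Fintype α] (P : α × α → Prop) [DecidablePred P] :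
    (Finset.univ.filter P).card =
      ∑ v, (Finset.univ.filter (fun u => P (u, v))).card := by
  rw [Finset.card_eq_sum_card_fiberwise
    (f := Prod.snd) (t := Finset.univ) (fun x _ => Finset.mem_univ _)]
  refine Finset.sum_congr rfl fun v _ => ?_
  apply Finset.card_nbij' (i := Prod.fst) (j := fun u => (u, v))
  · intro p hp
    simp only [Finset.mem_coe, Finset.mem_filter, Finset.mem_univ, true_and] at hp ⊢
    rw [← hp.2]
    exact hp.1
  · intro u hu
    simp only [Finset.mem_coe, Finset.mem_filter, Finset.mem_univ, true_and] at hu ⊢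
    refine ⟨hu, ?_⟩
    trivial
  · intro p hp
    simp only [Finset.mem_coe, Finset.mem_filter, Finset.mem_univ, true_and] at hp
    exact Prod.ext rfl hp.2.symm
  · intro v _; rfl

end ZModAux

/-- For any independent set `I` of the `L×L` toric grid (`L ≥ 4`
even), the total contour length `l(I) = ∑_R |∇R|`, summed over the connected
components `R` of `R_O(I)`, equals `4·Δ(I)` where `Δ(I) = L²/2 − |I|`. -/
theorem stmt_4 (L : ℕ) [NeZero L] (hL : 4 ≤ L) (hLeven : Even L)
    (I : Finset (ZMod L × ZMod L))
    (hI : ∀ u ∈ I, ∀ v ∈ I, ¬ (torus L).Adj u v) :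
    ∑ R ∈ Finset.univ.filter (fun R => IsComponent L I R), cutCard L R =
      4 * (L ^ 2 / 2 - I.card) := by
  classical
  have hROmem : ∀ v : (ZMod L × ZMod L), v ∈ RO L I ↔
      ((v ∈ I ∧ ¬ isEvenVertex v) ∨ (isEvenVertex v ∧ v ∉ I)) := by
    intro v
    simp only [RO, Finset.mem_union, Finset.mem_inter, Finset.mem_sdiff,
      evenClass, oddClass, Finset.mem_filter, Finset.mem_univ, true_and] <;>
    tauto
  -- components containing a common vertex coincide
  have hkey : ∀ R R' : Finset (ZMod L × ZMod L), IsComponent L I R → IsComponent L I R' →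
      (∃ v, v ∈ R ∧ v ∈ R') → R ⊆ R' := by
    rintro R R' ⟨-, hRsub, -, hRconn⟩ ⟨-, hR'sub, hR'cl, -⟩ ⟨v, hv, hv'⟩ w hw
    have hreach := hRconn.preconnected ⟨v, Finset.mem_coe.mpr hv⟩ ⟨w, Finset.mem_coe.mpr hw⟩
    refine reach_ind (G := torus L) (s := (↑R : Set (ZMod L × ZMod L))) (· ∈ R') ?_ hreach hv'
    intro a b ha hb hadj haP
    exact hR'cl a haP b (hRsub hb) hadj
  have hcomp_eq : ∀ R R' : Finset (ZMod L × ZMod L), IsComponent L I R → IsComponent L I R' →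
      ∀ v, v ∈ R → v ∈ R' → R = R' := by
    intro R R' hR hR' v hv hv'
    exact Finset.Subset.antisymm (hkey R R' hR hR' ⟨v, hv, hv'⟩)
      (hkey R' R hR' hR ⟨v, hv', hv⟩)
  -- every vertex of RO lies in a component
  have hexists : ∀ v ∈ RO L I, ∃ R, IsComponent L I R ∧ v ∈ R := by
    intro v hv
    set s : Set (ZMod L × ZMod L) := (↑(RO L I) : Set (ZMod L × ZMod L)) with hs
    have hvs : v ∈ s := Finset.mem_coe.mpr hv
    set G' := (torus L).induce s with hG'
    set R : Finset (ZMod L × ZMod L) := Finset.univ.filter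
      (fun w => ∃ hw : w ∈ s, G'.Reachable ⟨v, hvs⟩ ⟨w, hw⟩) with hR
    have hmemR : ∀ w : (ZMod L × ZMod L), w ∈ R ↔
        ∃ hw : w ∈ s, G'.Reachable ⟨v, hvs⟩ ⟨w, hw⟩ := by
      intro w; simp [hR]
    have hvR : v ∈ R := (hmemR v).mpr ⟨hvs, SimpleGraph.Reachable.refl _⟩
    have hRsub : R ⊆ RO L I := by
      intro w hw
      obtain ⟨hw', -⟩ := (hmemR w).mp hw
      exact Finset.mem_coe.mp hw'
    have hRcl : ∀ a ∈ R, ∀ b ∈ RO L I, (torus L).Adj a b → b ∈ R := by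
      intro a ha b hb hadj
      obtain ⟨ha', hr⟩ := (hmemR a).mp ha
      have hbs : b ∈ s := Finset.mem_coe.mpr hb
      refine (hmemR b).mpr ⟨hbs, hr.trans (SimpleGraph.Adj.reachable ?_)⟩
      show G'.Adj ⟨a, ha'⟩ ⟨b, hbs⟩
      simpa [hG'] using hadj
    refine ⟨R, ⟨⟨v, hvR⟩, hRsub, hRcl, ?_⟩, hvR⟩
    rw [SimpleGraph.connected_iff]
    refine ⟨?_, ⟨⟨v, Finset.mem_coe.mpr hvR⟩⟩⟩
    rintro ⟨a, ha⟩ ⟨b, hb⟩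
    have haR : a ∈ R := Finset.mem_coe.mp ha
    have hbR : b ∈ R := Finset.mem_coe.mp hb
    obtain ⟨has, hra⟩ := (hmemR a).mp haR
    obtain ⟨hbs, hrb⟩ := (hmemR b).mp hbR
    have hab : G'.Reachable ⟨a, has⟩ ⟨b, hbs⟩ := hra.symm.trans hrb
    obtain ⟨p⟩ := hab
    have hcl : ∀ x y : (ZMod L × ZMod L), x ∈ s → y ∈ s → (torus L).Adj x y →
        x ∈ (↑R : Set (ZMod L × ZMod L)) → y ∈ (↑R : Set (ZMod L × ZMod L)) := by
      intro x y hx hy hadj hxR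
      exact Finset.mem_coe.mpr (hRcl x (Finset.mem_coe.mp hxR) y (Finset.mem_coe.mp hy) hadj)
    obtain ⟨hb', hr⟩ := walk_transfer (G := torus L) hcl p ha
    exact hr
  -- cut of a component goes to the complement of RO
  have hcut_eq : ∀ R : Finset (ZMod L × ZMod L), IsComponent L I R →
      cutCard L R = (Finset.univ.filter
        (fun p : (ZMod L × ZMod L) × (ZMod L × ZMod L) => p.1 ∈ R ∧ p.2 ∉ RO L I ∧ (torus L).Adj p.1 p.2)).card := by
    rintro R ⟨-, hsub, hcl, -⟩
    unfold cutCard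
    congr 1
    apply Finset.filter_congr
    intro p _
    constructor
    · rintro ⟨h1, h2, h3⟩
      refine ⟨h1, fun hmem => h2 (hcl p.1 h1 p.2 hmem h3), h3⟩
    · rintro ⟨h1, h2, h3⟩
      exact ⟨h1, fun hmem => h2 (hsub hmem), h3⟩
  -- sum over components = cut of RO
  have hsum : ∑ R ∈ Finset.univ.filter (fun R => IsComponent L I R), cutCard L R =
      cutCard L (RO L I) := by
    have h1 : ∑ R ∈ Finset.univ.filter (fun R => IsComponent L I R), cutCard L R =
        ∑ R ∈ Finset.univ.filter (fun R => IsComponent L I R),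
          (Finset.univ.filter (fun p : (ZMod L × ZMod L) × (ZMod L × ZMod L) =>
            p.1 ∈ R ∧ p.2 ∉ RO L I ∧ (torus L).Adj p.1 p.2)).card := by
      refine Finset.sum_congr rfl fun R hR => ?_
      exact hcut_eq R (Finset.mem_filter.mp hR).2
    rw [h1, ← Finset.card_biUnion]
    · unfold cutCard
      congr 1
      ext p
      simp only [Finset.mem_biUnion, Finset.mem_filter, Finset.mem_univ, true_and]
      constructor
      · rintro ⟨R, hR, h1, h2, h3⟩
        exact ⟨hR.2.1 h1, h2, h3⟩
      · rintro ⟨h1, h2, h3⟩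
        obtain ⟨R, hR, hmem⟩ := hexists p.1 h1
        exact ⟨R, hR, hmem, h2, h3⟩
    · intro R hR R' hR' hne
      simp only [Finset.mem_coe, Finset.mem_filter, Finset.mem_univ, true_and] at hR hR'
      refine Finset.disjoint_left.mpr ?_
      intro p hp hp'
      simp only [Finset.mem_filter, Finset.mem_univ, true_and] at hp hp'
      exact hne (hcomp_eq R R' hR hR' p.1 hp.1 hp'.1)
  rw [hsum]
  -- now the counting argument
  set A : Finset ((ZMod L × ZMod L) × (ZMod L × ZMod L)) := Finset.univ.filter
    (fun p : (ZMod L × ZMod L) × (ZMod L × ZMod L) => isEvenVertex p.1 ∧ (torus L).Adj p.1 p.2) with hA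
  have hAcard : A.card = 4 * (L ^ 2 / 2) := by
    rw [hA]
    rw [card_pairs_fst]
    have hfib : ∀ u : (ZMod L × ZMod L), (Finset.univ.filter
        (fun v => isEvenVertex u ∧ (torus L).Adj u v)).card =
        if isEvenVertex u then 4 else 0 := by
      intro u
      split_ifs with h
      · rw [← nbhd_card hL u]
        congr 1
        apply Finset.filter_congr
        intro v _
        simp [h]
      · convert Finset.card_empty
        apply Finset.filter_false_of_mem
        intro v _
        tauto
    calc ∑ u, (Finset.univ.filter
          (fun v => isEvenVertex u ∧ (torus L).Adj u v)).card
        = ∑ u : (ZMod L × ZMod L), if isEvenVertex u then 4 else 0 :=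
          Finset.sum_congr rfl fun u _ => hfib u
      _ = ∑ _u ∈ evenClass L, 4 := (Finset.sum_filter _ _).symm
      _ = (evenClass L).card * 4 := by rw [Finset.sum_const, smul_eq_mul]
      _ = 4 * (L ^ 2 / 2) := by rw [card_evenClass hLeven, Nat.mul_comm]
  have hsplit1 : (A.filter (fun p => p.1 ∈ I)).card +
      (A.filter (fun p => ¬ p.1 ∈ I)).card = A.card :=
    Finset.card_filter_add_card_filter_not _
  have hsplit2 : ((A.filter (fun p => ¬ p.1 ∈ I)).filter (fun p => p.2 ∈ I)).card +
      ((A.filter (fun p => ¬ p.1 ∈ I)).filter (fun p => ¬ p.2 ∈ I)).card =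
      (A.filter (fun p => ¬ p.1 ∈ I)).card :=
    Finset.card_filter_add_card_filter_not _
  have hc1 : (A.filter (fun p => p.1 ∈ I)).card =
      4 * (I.filter (fun v => isEvenVertex v)).card := by
    rw [hA, Finset.filter_filter]
    rw [card_pairs_fst]
    have hfib : ∀ u : (ZMod L × ZMod L), (Finset.univ.filter
        (fun v => (isEvenVertex u ∧ (torus L).Adj u v) ∧ u ∈ I)).card =
        if isEvenVertex u ∧ u ∈ I then 4 else 0 := by
      intro u
      split_ifs with h
      · rw [← nbhd_card hL u]
        congr 1
        apply Finset.filter_congr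
        intro v _
        simp [h.1, h.2]
      · convert Finset.card_empty
        apply Finset.filter_false_of_mem
        intro v _
        tauto
    have hset : Finset.univ.filter (fun u : (ZMod L × ZMod L) => isEvenVertex u ∧ u ∈ I) =
        I.filter (fun v => isEvenVertex v) := by
      ext u
      simp [and_comm]
    calc ∑ u, (Finset.univ.filter
          (fun v => (isEvenVertex u ∧ (torus L).Adj u v) ∧ u ∈ I)).card
        = ∑ u : (ZMod L × ZMod L), if isEvenVertex u ∧ u ∈ I then 4 else 0 :=
          Finset.sum_congr rfl fun u _ => hfib u
      _ = ∑ _u ∈ Finset.univ.filter (fun u : (ZMod L × ZMod L) => isEvenVertex u ∧ u ∈ I), 4 :=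
          (Finset.sum_filter _ _).symm
      _ = 4 * (I.filter (fun v => isEvenVertex v)).card := by
          rw [Finset.sum_const, smul_eq_mul, hset, Nat.mul_comm]
  have hc2 : ((A.filter (fun p => ¬ p.1 ∈ I)).filter (fun p => p.2 ∈ I)).card =
      4 * (I.filter (fun v => ¬ isEvenVertex v)).card := by
    have hset : (A.filter (fun p => ¬ p.1 ∈ I)).filter (fun p => p.2 ∈ I) =
        Finset.univ.filter (fun p : (ZMod L × ZMod L) × (ZMod L × ZMod L) =>
          (p.2 ∈ I ∧ ¬ isEvenVertex p.2) ∧ (torus L).Adj p.1 p.2) := by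
      rw [hA, Finset.filter_filter, Finset.filter_filter]
      apply Finset.filter_congr
      intro p _
      constructor
      · rintro ⟨⟨he, hadj⟩, _, h2⟩
        exact ⟨⟨h2, fun hev => (adj_parity hLeven hadj).mp he hev⟩, hadj⟩
      · rintro ⟨⟨h2, hno⟩, hadj⟩
        have he : isEvenVertex p.1 := by
          have := adj_parity hLeven hadj; tauto
        exact ⟨⟨he, hadj⟩, fun h1 => hI p.1 h1 p.2 h2 hadj, h2⟩
    rw [hset]
    rw [card_pairs_snd]
    have hfib : ∀ v : (ZMod L × ZMod L), (Finset.univ.filter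
        (fun u : (ZMod L × ZMod L) => (v ∈ I ∧ ¬ isEvenVertex v) ∧ (torus L).Adj u v)).card =
        if v ∈ I ∧ ¬ isEvenVertex v then 4 else 0 := by
      intro v
      split_ifs with h
      · rw [← nbhd_card hL v]
        congr 1
        ext u
        simp only [Finset.mem_filter, Finset.mem_univ, true_and]
        constructor
        · rintro ⟨-, hadj⟩; exact hadj.symm
        · intro hadj; exact ⟨h, hadj.symm⟩
      · convert Finset.card_empty
        apply Finset.filter_false_of_mem
        intro u _
        tauto
    have hset2 : Finset.univ.filter (fun v : (ZMod L × ZMod L) => v ∈ I ∧ ¬ isEvenVertex v) =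
        I.filter (fun v => ¬ isEvenVertex v) := by
      ext u
      simp
    calc ∑ v, (Finset.univ.filter
          (fun u : (ZMod L × ZMod L) => (v ∈ I ∧ ¬ isEvenVertex v) ∧ (torus L).Adj u v)).card
        = ∑ v : (ZMod L × ZMod L), if v ∈ I ∧ ¬ isEvenVertex v then 4 else 0 :=
          Finset.sum_congr rfl fun v _ => hfib v
      _ = ∑ _v ∈ Finset.univ.filter (fun v : (ZMod L × ZMod L) => v ∈ I ∧ ¬ isEvenVertex v), 4 :=
          (Finset.sum_filter _ _).symm
      _ = 4 * (I.filter (fun v => ¬ isEvenVertex v)).card := by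
          rw [Finset.sum_const, smul_eq_mul, hset2, Nat.mul_comm]
  have hc3 : ((A.filter (fun p => ¬ p.1 ∈ I)).filter (fun p => ¬ p.2 ∈ I)).card =
      cutCard L (RO L I) := by
    unfold cutCard
    rw [hA, Finset.filter_filter, Finset.filter_filter]
    congr 1
    apply Finset.filter_congr
    intro p _
    constructor
    · rintro ⟨⟨he, hadj⟩, hn1, hn2⟩
      refine ⟨(hROmem p.1).mpr (Or.inr ⟨he, hn1⟩), ?_, hadj⟩
      intro hmem
      rcases (hROmem p.2).mp hmem with ⟨h2I, -⟩ | ⟨hev, -⟩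
      · exact hn2 h2I
      · exact (adj_parity hLeven hadj).mp he hev
    · rintro ⟨h1, h2, hadj⟩
      rcases (hROmem p.1).mp h1 with ⟨h1I, hno1⟩ | ⟨hev, hnI⟩
      · exfalso
        have hev2 : isEvenVertex p.2 := by
          have := adj_parity hLeven hadj
          tauto
        have hmem2 : p.2 ∈ I := by
          by_contra hc
          exact h2 ((hROmem p.2).mpr (Or.inr ⟨hev2, hc⟩))
        exact hI p.1 h1I p.2 hmem2 hadj
      · refine ⟨⟨hev, hadj⟩, hnI, ?_⟩
        intro h2I
        have hodd2 : ¬ isEvenVertex p.2 := (adj_parity hLeven hadj).mp hev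
        exact h2 ((hROmem p.2).mpr (Or.inl ⟨h2I, hodd2⟩))
  have hIsplit : (I.filter (fun v => isEvenVertex v)).card +
      (I.filter (fun v => ¬ isEvenVertex v)).card = I.card :=
    Finset.card_filter_add_card_filter_not _
  omega
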